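/- Let k be an algebraically closed field of characteristic zero and let D = ∂x + (a(x)·y + b(x))·∂y be a Shamsuddin derivation with a ≠ 0. Then D admits an eigenvector (a nonconstant f ∈ k[x,y] with D(f) = λ·f for some λ ∈ k[x,y]) if and only if there exists P ∈ k[x] with P' = a·P + b. Moreover, if P' = a·P + b then D(y − P) = a·(y − P), and every irreducible eigenvector of D is a k*-scalar multiple of y − P. -/

import Mathlib

namespace ShamAux
open Polynomial

variable {k : Type*} [Field k]

noncomputable def dC (F : Polynomial (Polynomial k)) : Polynomial (Polynomial k) :=
  ⟨AddMonoidAlgebra.ofCoeff (F.toFinsupp.coeff.mapRange (fun q => derivative q) (by simp))⟩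

@[simp] lemma coeff_dC (F : Polynomial (Polynomial k)) (n : ℕ) :
    (dC F).coeff n = derivative (F.coeff n) := rfl

lemma dC_add (F G : Polynomial (Polynomial k)) : dC (F + G) = dC F + dC G := by
  ext n; simp

lemma dC_sub (F G : Polynomial (Polynomial k)) : dC (F - G) = dC F - dC G := by
  ext n; simp

lemma dC_mul (F G : Polynomial (Polynomial k)) : dC (F * G) = dC F * G + F * dC G := by
  apply Polynomial.ext; intro n
  simp only [coeff_dC, coeff_add, coeff_mul, map_sum, derivative_mul]
  rw [Finset.sum_add_distrib]

@[simp] lemma dC_C (q : Polynomial k) : dC (C q) = C (derivative q) := by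
  ext n; simp [coeff_C, apply_ite (derivative (R := k))]

@[simp] lemma dC_X : dC (X : Polynomial (Polynomial k)) = 0 := by
  ext n; simp [coeff_X, apply_ite (derivative (R := k))]

@[simp] lemma dC_one : dC (1 : Polynomial (Polynomial k)) = 0 := by
  rw [← C_1, dC_C]; simp

/-- The Shamsuddin derivation on `k[x][y]`. -/
noncomputable def delta (A B : Polynomial k) (F : Polynomial (Polynomial k)) :
    Polynomial (Polynomial k) :=
  dC F + (C A * X + C B) * derivative F

variable (A B : Polynomial k)

lemma delta_coeff (F : Polynomial (Polynomial k)) (m : ℕ) :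
    (delta A B F).coeff m =
      derivative (F.coeff m) + A * (F.coeff m * m) + B * (F.coeff (m + 1) * (m + 1)) := by
  have h : delta A B F = dC F + C A * (X * derivative F) + C B * derivative F := by
    unfold delta; ring
  rw [h, coeff_add, coeff_add, coeff_dC, coeff_C_mul, coeff_C_mul, coeff_derivative]
  congr 2
  cases m with
  | zero => simp
  | succ m => rw [coeff_X_mul, coeff_derivative]; push_cast; ring

lemma delta_add (F G : Polynomial (Polynomial k)) :
    delta A B (F + G) = delta A B F + delta A B G := by
  unfold delta; rw [dC_add, derivative_add]; ring

lemma delta_sub (F G : Polynomial (Polynomial k)) :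
    delta A B (F - G) = delta A B F - delta A B G := by
  unfold delta; rw [dC_sub, derivative_sub]; ring

lemma delta_mul (F G : Polynomial (Polynomial k)) :
    delta A B (F * G) = delta A B F * G + F * delta A B G := by
  unfold delta; rw [dC_mul, derivative_mul]; ring

@[simp] lemma delta_CC (q : Polynomial k) : delta A B (C q) = C (derivative q) := by
  unfold delta; simp

@[simp] lemma delta_one : delta A B (1 : Polynomial (Polynomial k)) = 0 := by
  unfold delta; simp

lemma delta_lin {A B P : Polynomial k} (hP : derivative P = A * P + B) :
    delta A B (X - C P) = C A * (X - C P) := by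
  unfold delta
  rw [dC_sub, dC_X, dC_C, hP, derivative_sub, derivative_X, derivative_C, map_add, map_mul]
  ring

lemma delta_eig_pow {G : Polynomial (Polynomial k)} (hG : delta A B G = C A * G) (n : ℕ) :
    delta A B (G ^ n) = C ((n : Polynomial k) * A) * G ^ n := by
  induction n with
  | zero => simp
  | succ n ih =>
    rw [pow_succ, delta_mul, ih, hG]
    push_cast
    rw [add_mul, map_add, one_mul]
    ring

/-- key fact about `k[x]` in characteristic zero: an eigenvector of `d/dx` has
eigenvalue `0`. -/
lemma eig_const [CharZero k] {q u : Polynomial k} (hq : q ≠ 0)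
    (h : derivative q = u * q) : u = 0 ∧ derivative q = 0 := by
  rcases eq_or_ne q.natDegree 0 with h0 | h0
  · have hd : derivative q = 0 := by
      rw [eq_C_of_natDegree_eq_zero h0, derivative_C]
    rcases mul_eq_zero.mp (hd ▸ h.symm) with hu | hq' 
    · exact ⟨hu, hd⟩
    · exact absurd hq' hq
  · have h1 : (derivative q).natDegree < q.natDegree := natDegree_derivative_lt h0
    by_cases hu : u = 0
    · subst hu; rw [zero_mul] at h; exact ⟨rfl, h⟩
    · rw [h, natDegree_mul hu hq] at h1
      omega

variable [CharZero k]

lemma master {A B : Polynomial k} (hA : A ≠ 0)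
    {F L : Polynomial (Polynomial k)} (hF : ∀ c : k, F ≠ C (C c))
    (h : delta A B F = L * F) :
    ∃ (n : ℕ) (c₀ : k), 0 < n ∧ c₀ ≠ 0 ∧ F.natDegree = n ∧
      F.leadingCoeff = C c₀ ∧ L = C ((n : Polynomial k) * A) ∧
      derivative (F.coeff (n - 1)) =
        A * F.coeff (n - 1) - (n : Polynomial k) * C c₀ * B := by
  have hF0 : F ≠ 0 := fun h0 => hF 0 (by simp [h0])
  have hdeg : (delta A B F).natDegree ≤ F.natDegree := by
    refine natDegree_le_iff_coeff_eq_zero.mpr fun m hm => ?_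
    rw [delta_coeff, coeff_eq_zero_of_natDegree_lt hm,
      coeff_eq_zero_of_natDegree_lt (hm.trans (Nat.lt_succ_self m))]
    simp
  have hLdeg : L.natDegree = 0 := by
    rcases eq_or_ne L 0 with rfl | hL
    · simp
    · have hmul := natDegree_mul hL hF0
      rw [← h] at hmul
      omega
  obtain ⟨l, rfl⟩ := natDegree_eq_zero.mp hLdeg
  set n := F.natDegree with hn
  have E : ∀ m : ℕ, derivative (F.coeff m) + A * (F.coeff m * m)
      + B * (F.coeff (m + 1) * (m + 1)) = l * F.coeff m := by
    intro m
    have hcg := congrArg (fun G => Polynomial.coeff G m) h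
    simpa only [delta_coeff, coeff_C_mul] using hcg
  have htopz : F.coeff (n + 1) = 0 := coeff_eq_zero_of_natDegree_lt (by omega)
  have hFn : F.coeff n ≠ 0 := by
    rw [hn, coeff_natDegree]
    exact leadingCoeff_ne_zero.mpr hF0
  have En : derivative (F.coeff n) = (l - A * n) * F.coeff n := by
    have hEn := E n; rw [htopz] at hEn; linear_combination hEn
  obtain ⟨hl, hdn⟩ := eig_const hFn En
  have hl' : l = A * n := by linear_combination hl
  have hconst : F.coeff n = C ((F.coeff n).coeff 0) :=
    eq_C_of_natDegree_eq_zero (natDegree_eq_zero_of_derivative_eq_zero hdn)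
  set c₀ := (F.coeff n).coeff 0 with hc₀def
  have hc0 : c₀ ≠ 0 := fun hz => hFn (by rw [hconst, hz, map_zero])
  have hnpos : 0 < n := by
    rcases Nat.eq_zero_or_pos n with h0 | hpos
    · exfalso
      apply hF c₀
      have h0' : F.natDegree = 0 := by omega
      have hc00 : F.coeff 0 = C c₀ := h0 ▸ hconst
      rw [eq_C_of_natDegree_eq_zero h0', hc00]
    · exact hpos
  obtain ⟨m, hm⟩ : ∃ m, n = m + 1 := ⟨n - 1, (Nat.succ_pred_eq_of_pos hnpos).symm⟩
  have hCn : F.coeff (m + 1) = C c₀ := by rw [← hm]; exact hconst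
  have hfin : derivative (F.coeff m) = A * F.coeff m - (n : Polynomial k) * C c₀ * B := by
    have Em := E m
    rw [hCn, hl'] at Em
    have hcast : ((n : Polynomial k)) = (m : Polynomial k) + 1 := by
      rw [hm]; push_cast; ring
    rw [hcast] at Em ⊢
    linear_combination Em
  refine ⟨n, c₀, hnpos, hc0, rfl, ?_, by rw [hl']; ring_nf, ?_⟩
  · rw [← hconst, hn, coeff_natDegree]
  · rw [show n - 1 = m from by omega]
    exact hfin

lemma exists_P {A B : Polynomial k} (hA : A ≠ 0)
    {F L : Polynomial (Polynomial k)} (hF : ∀ c : k, F ≠ C (C c))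
    (h : delta A B F = L * F) :
    ∃ P : Polynomial k, derivative P = A * P + B := by
  obtain ⟨n, c₀, hn, hc₀, _, _, _, hder⟩ := master hA hF h
  refine ⟨C (-(((n : k) * c₀)⁻¹)) * F.coeff (n - 1), ?_⟩
  set u := (n : k) * c₀ with hu
  have hu0 : u ≠ 0 := mul_ne_zero (Nat.cast_ne_zero.mpr (by omega)) hc₀
  rw [derivative_C_mul, hder]
  have h1 : (C (-(u⁻¹)) : Polynomial k) * ((n : Polynomial k) * C c₀) = -1 := by
    rw [← C_eq_natCast, ← C_mul, ← C_mul, ← hu,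
      show -(u⁻¹) * u = -1 from by field_simp]
    simp
  linear_combination (-B) * h1

lemma eigen_form {A B : Polynomial k} (hA : A ≠ 0) {P : Polynomial k}
    (hP : derivative P = A * P + B) {F L : Polynomial (Polynomial k)}
    (hF : ∀ c : k, F ≠ C (C c)) (h : delta A B F = L * F) :
    ∃ (c₀ : k) (n : ℕ), c₀ ≠ 0 ∧ 0 < n ∧ F = C (C c₀) * (X - C P) ^ n := by
  obtain ⟨n, c₀, hn, hc₀, hndeg, hlead, hLval, -⟩ := master hA hF h
  set G : Polynomial (Polynomial k) := X - C P with hG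
  have hGdelta : delta A B G = C A * G := delta_lin hP
  have hpow := delta_eig_pow A B hGdelta n
  set Q : Polynomial (Polynomial k) := C (C c₀) * G ^ n with hQ
  have hQdelta : delta A B Q = C ((n : Polynomial k) * A) * Q := by
    rw [hQ, delta_mul, delta_CC, hpow, derivative_C, map_zero]
    ring
  rw [hLval] at h
  have hH : delta A B (F - Q) = C ((n : Polynomial k) * A) * (F - Q) := by
    rw [delta_sub, h, hQdelta]; ring
  have hFn : F.coeff n = C c₀ := by rw [← hndeg, coeff_natDegree, hlead]
  have hQlead : Q.coeff n = C c₀ := by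
    rw [hQ, coeff_C_mul]
    have hmonic : (G ^ n).Monic := by
      rw [hG]; exact (monic_X_sub_C P).pow n
    have hdegGn : (G ^ n).natDegree = n := by
      rw [hG, natDegree_pow, natDegree_X_sub_C, mul_one]
    rw [show (G ^ n).coeff n = 1 from by
        nth_rewrite 2 [← hdegGn]
        exact hmonic.coeff_natDegree, mul_one]
  have hcoeffn : (F - Q).coeff n = 0 := by rw [coeff_sub, hFn, hQlead, sub_self]
  by_cases hHz : F - Q = 0
  · exact ⟨c₀, n, hc₀, hn, by rw [← sub_eq_zero]; exact hHz⟩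
  · exfalso
    set H := F - Q with hHdef
    set m := H.natDegree with hmdef
    have hQdeg : Q.natDegree = n := by
      rw [hQ, natDegree_C_mul (by simpa using hc₀), natDegree_pow, hG,
        natDegree_X_sub_C, mul_one]
    have hm_le : m ≤ n := by
      rw [hmdef, hHdef]
      exact le_trans (natDegree_sub_le F Q) (max_le hndeg.le hQdeg.le)
    have hHm : H.coeff m ≠ 0 := by
      rw [hmdef, coeff_natDegree]; exact leadingCoeff_ne_zero.mpr hHz
    have hm_ne : m ≠ n := fun he => hHm (he ▸ hcoeffn)
    have EH : derivative (H.coeff m) + A * (H.coeff m * m)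
        + B * (H.coeff (m + 1) * (m + 1)) = ((n : Polynomial k) * A) * H.coeff m := by
      have hcg := congrArg (fun G => Polynomial.coeff G m) hH
      simpa only [delta_coeff, coeff_C_mul] using hcg
    have hz : H.coeff (m + 1) = 0 := coeff_eq_zero_of_natDegree_lt (by omega)
    have EH' : derivative (H.coeff m)
        = ((n : Polynomial k) * A - A * m) * H.coeff m := by
      rw [hz] at EH; linear_combination EH
    obtain ⟨h0, -⟩ := eig_const hHm EH'
    have hzero : ((n : Polynomial k) - m) * A = 0 := by linear_combination h0
    rcases mul_eq_zero.mp hzero with hnm | hA0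
    · have hcast : (n : Polynomial k) = m := by linear_combination hnm
      exact hm_ne (by exact_mod_cast hcast.symm)
    · exact hA hA0

section Transfer

/-- The algebra isomorphism `k[X₀,X₁] ≃ k[x][y]` sending `X₀ ↦ C x`, `X₁ ↦ y`. -/
noncomputable def Phi (k : Type*) [CommSemiring k] :
    MvPolynomial (Fin 2) k ≃ₐ[k] Polynomial (Polynomial k) :=
  (MvPolynomial.renameEquiv k (Equiv.swap 0 1)).trans
    ((MvPolynomial.finSuccEquiv k 1).trans
      (Polynomial.mapAlgEquiv ((MvPolynomial.finSuccEquiv k 0).trans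
        (Polynomial.mapAlgEquiv (MvPolynomial.isEmptyAlgEquiv k (Fin 0))))))

@[simp] lemma Phi_X1 : Phi k (MvPolynomial.X 1) = X := by
  have h1 : (Equiv.swap (0 : Fin 2) 1) 1 = 0 := Equiv.swap_apply_right 0 1
  simp [Phi, h1, MvPolynomial.finSuccEquiv_X_zero]

@[simp] lemma Phi_X0 : Phi k (MvPolynomial.X 0) = C X := by
  have h1 : (Equiv.swap (0 : Fin 2) 1) 0 = 1 := Equiv.swap_apply_left 0 1
  unfold Phi
  simp only [AlgEquiv.trans_apply, MvPolynomial.renameEquiv_apply, MvPolynomial.rename_X, h1]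
  rw [show (MvPolynomial.X (1 : Fin 2) : MvPolynomial (Fin 2) k)
      = MvPolynomial.X (Fin.succ 0) from rfl, MvPolynomial.finSuccEquiv_X_succ]
  simp [coe_mapAlgEquiv, MvPolynomial.finSuccEquiv_X_zero]

@[simp] lemma Phi_CC (c : k) : Phi k (MvPolynomial.C c) = C (C c) := by
  rw [show (MvPolynomial.C c : MvPolynomial (Fin 2) k) = algebraMap k _ c from rfl,
    AlgEquiv.commutes]
  simp [Polynomial.algebraMap_apply]

@[simp] lemma Phi_aeval (p : Polynomial k) :
    Phi k (Polynomial.aeval (MvPolynomial.X (0 : Fin 2)) p) = C p := by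
  have h : ((Phi k).toAlgHom.comp
      (Polynomial.aeval (MvPolynomial.X (0 : Fin 2) : MvPolynomial (Fin 2) k)))
      = CAlgHom (R := k) := by
    apply Polynomial.algHom_ext
    simp [CAlgHom]
  have := DFunLike.congr_fun h p
  simpa [CAlgHom] using this

lemma Phi_D (a b : Polynomial k)
    (D : Derivation k (MvPolynomial (Fin 2) k) (MvPolynomial (Fin 2) k))
    (hD : ∀ f, D f = MvPolynomial.pderiv (0 : Fin 2) f +
      (Polynomial.aeval (MvPolynomial.X 0 : MvPolynomial (Fin 2) k) a * MvPolynomial.X 1 +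
        Polynomial.aeval (MvPolynomial.X 0 : MvPolynomial (Fin 2) k) b) *
        MvPolynomial.pderiv (1 : Fin 2) f)
    (f : MvPolynomial (Fin 2) k) :
    Phi k (D f) = delta a b (Phi k f) := by
  induction f using MvPolynomial.induction_on with
  | C c =>
    rw [hD, MvPolynomial.pderiv_C, MvPolynomial.pderiv_C]
    simp
  | add p q hp hq =>
    rw [map_add D, map_add, map_add, delta_add, hp, hq]
  | mul_X p i hp =>
    have hXi : Phi k (D (MvPolynomial.X i)) = delta a b (Phi k (MvPolynomial.X i)) := by
      fin_cases i
      · show Phi k (D (MvPolynomial.X 0)) = delta a b (Phi k (MvPolynomial.X 0))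
        rw [hD, MvPolynomial.pderiv_X_self,
          MvPolynomial.pderiv_X_of_ne (by decide : (0 : Fin 2) ≠ 1)]
        simp only [mul_zero, add_zero, map_one, Phi_X0]
        unfold delta
        simp
      · show Phi k (D (MvPolynomial.X 1)) = delta a b (Phi k (MvPolynomial.X 1))
        rw [hD, MvPolynomial.pderiv_X_self,
          MvPolynomial.pderiv_X_of_ne (by decide : (1 : Fin 2) ≠ 0)]
        simp only [zero_add, mul_one, map_add, map_mul, Phi_aeval, Phi_X1]
        unfold delta
        simp
    rw [Derivation.leibniz, smul_eq_mul, smul_eq_mul, map_add, map_mul, map_mul,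
      hp, hXi, map_mul, delta_mul]
    ring

lemma eq_CC_of_totalDegree_eq_zero {f : MvPolynomial (Fin 2) k}
    (hf : f.totalDegree = 0) : ∃ c : k, f = MvPolynomial.C c := by
  refine ⟨MvPolynomial.coeff 0 f, MvPolynomial.ext _ _ fun m => ?_⟩
  rw [MvPolynomial.coeff_C]
  split_ifs with hm
  · rw [← hm]
  · by_contra hne
    have hmem : m ∈ f.support := MvPolynomial.mem_support_iff.mpr hne
    have := (MvPolynomial.totalDegree_eq_zero_iff _ f).mp hf m hmem
    exact hm (Eq.symm (Finsupp.ext fun x => this x))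

end Transfer

end ShamAux

open MvPolynomial

/-- A Shamsuddin derivation `D = ∂x + (a(x)y + b(x))·∂y` with `a ≠ 0` admits an
eigenvector iff `E₁(a,b)` has a polynomial solution `P`; in that case
`D(y − P) = a·(y − P)` and every irreducible eigenvector is a scalar multiple of
`y − P`. -/
theorem shamsuddin_eigenvectors {k : Type*} [Field k] [CharZero k] [IsAlgClosed k]
    (a b : Polynomial k) (ha : a ≠ 0)
    (D : Derivation k (MvPolynomial (Fin 2) k) (MvPolynomial (Fin 2) k))
    (hD : ∀ f, D f = pderiv (0 : Fin 2) f +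
      (Polynomial.aeval (X 0 : MvPolynomial (Fin 2) k) a * X 1 +
        Polynomial.aeval (X 0 : MvPolynomial (Fin 2) k) b) * pderiv (1 : Fin 2) f) :
    ((∃ (f lam : MvPolynomial (Fin 2) k), f.totalDegree ≠ 0 ∧ D f = lam * f) ↔
      ∃ P : Polynomial k, Polynomial.derivative P = a * P + b) ∧
    (∀ P : Polynomial k, Polynomial.derivative P = a * P + b →
      (D (X 1 - Polynomial.aeval (X 0 : MvPolynomial (Fin 2) k) P) =
        Polynomial.aeval (X 0 : MvPolynomial (Fin 2) k) a *
          (X 1 - Polynomial.aeval (X 0 : MvPolynomial (Fin 2) k) P)) ∧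
      ∀ f : MvPolynomial (Fin 2) k, Irreducible f → (∃ lam, D f = lam * f) →
        ∃ c : k, c ≠ 0 ∧
          f = C c * (X 1 - Polynomial.aeval (X 0 : MvPolynomial (Fin 2) k) P)) := by
  have key : ∀ f, ShamAux.Phi k (D f) = ShamAux.delta a b (ShamAux.Phi k f) :=
    ShamAux.Phi_D a b D hD
  have part2a : ∀ P : Polynomial k, Polynomial.derivative P = a * P + b →
      D (X 1 - Polynomial.aeval (X 0 : MvPolynomial (Fin 2) k) P) =
        Polynomial.aeval (X 0 : MvPolynomial (Fin 2) k) a *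
          (X 1 - Polynomial.aeval (X 0 : MvPolynomial (Fin 2) k) P) := by
    intro P hP
    apply (ShamAux.Phi k).injective
    simp only [key, map_mul, map_sub, ShamAux.Phi_X1, ShamAux.Phi_aeval]
    rw [← ShamAux.delta_sub]
    exact ShamAux.delta_lin hP
  have hne : ∀ f : MvPolynomial (Fin 2) k, f.totalDegree ≠ 0 →
      ∀ c : k, ShamAux.Phi k f ≠ Polynomial.C (Polynomial.C c) := by
    intro f hdeg c hc
    apply hdeg
    have hfc : f = C c := (ShamAux.Phi k).injective (by rw [ShamAux.Phi_CC]; exact hc)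
    rw [hfc, totalDegree_C]
  refine ⟨⟨?_, ?_⟩, ?_⟩
  · rintro ⟨f, lam, hdeg, heq⟩
    exact ShamAux.exists_P ha (hne f hdeg) (by rw [← key, heq, map_mul])
  · rintro ⟨P, hP⟩
    refine ⟨X 1 - Polynomial.aeval (X 0 : MvPolynomial (Fin 2) k) P,
      Polynomial.aeval (X 0 : MvPolynomial (Fin 2) k) a, ?_, part2a P hP⟩
    intro h0
    obtain ⟨c, hc⟩ := ShamAux.eq_CC_of_totalDegree_eq_zero h0
    have hc' := congrArg (ShamAux.Phi k) hc
    rw [ShamAux.Phi_CC, map_sub, ShamAux.Phi_X1, ShamAux.Phi_aeval] at hc'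
    have h1 := congrArg Polynomial.natDegree hc'
    rw [Polynomial.natDegree_X_sub_C, Polynomial.natDegree_C] at h1
    exact one_ne_zero h1
  · intro P hP
    refine ⟨part2a P hP, ?_⟩
    rintro f hirr ⟨lam, heq⟩
    have hF : ∀ c : k, ShamAux.Phi k f ≠ Polynomial.C (Polynomial.C c) := by
      intro c hc
      have hfc : f = C c := (ShamAux.Phi k).injective (by rw [ShamAux.Phi_CC]; exact hc)
      rcases eq_or_ne c 0 with rfl | hc0
      · rw [hfc, map_zero] at hirr
        exact not_irreducible_zero hirr
      · refine hirr.not_isUnit ?_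
        rw [hfc, ← MvPolynomial.algebraMap_eq]
        exact (isUnit_iff_ne_zero.mpr hc0).map _
    obtain ⟨c₀, n, hc₀, hn, hform⟩ :=
      ShamAux.eigen_form ha hP hF (by rw [← key, heq, map_mul])
    have hirrF : Irreducible (ShamAux.Phi k f) := hirr.map (ShamAux.Phi k)
    have hn1 : n = 1 := by
      by_contra hne1
      rw [hform] at hirrF
      have hu : IsUnit (Polynomial.C (Polynomial.C c₀) : Polynomial (Polynomial k)) :=
        Polynomial.isUnit_C.mpr (Polynomial.isUnit_C.mpr (isUnit_iff_ne_zero.mpr hc₀))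
      have hGn := (irreducible_isUnit_mul hu).mp hirrF
      have hsplit : (Polynomial.X - Polynomial.C P) ^ n
          = (Polynomial.X - Polynomial.C P) *
            (Polynomial.X - Polynomial.C P) ^ (n - 1) := by
        rw [← pow_succ']
        congr 1
        omega
      rcases hGn.isUnit_or_isUnit hsplit with hu1 | hu2
      · exact Polynomial.not_isUnit_of_natDegree_pos _
          (by rw [Polynomial.natDegree_X_sub_C]; omega) hu1
      · exact Polynomial.not_isUnit_of_natDegree_pos _
          (by rw [Polynomial.natDegree_pow, Polynomial.natDegree_X_sub_C, mul_one]; omega) hu2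
    subst hn1
    rw [pow_one] at hform
    refine ⟨c₀, hc₀, ?_⟩
    apply (ShamAux.Phi k).injective
    rw [hform]
    simp only [map_mul, map_sub, ShamAux.Phi_CC, ShamAux.Phi_X1, ShamAux.Phi_aeval]
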